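/- (Part of proof of Theorem 4.) Let L < ∞ and let w : [0,L) → W be a C¹ solution of the combinatorial Yamabe flow with w(0) = 0. Then for each boundary index i, sup_{t ∈ [0,L)} w_i(t) < ∞; that is, no coordinate w_i(t) tends to +∞ in finite time. -/

import Mathlib

open Real Filter Set

/-- Inverse hyperbolic cosine. -/
noncomputable def arcosh (x : ℝ) : ℝ := Real.log (x + Real.sqrt (x ^ 2 - 1))

/-- The length of the side of a right-angled hyperbolic hexagon opposite the side of
length `x`, where the three pairwise non-adjacent sides have lengths `x, y, z`. -/
noncomputable def theta (x y z : ℝ) : ℝ :=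
  _root_.arcosh ((Real.cosh x + Real.cosh y * Real.cosh z) / (Real.sinh y * Real.sinh z))

/-- Combinatorial data of an ideally triangulated compact surface with `n` boundary
components, together with a fixed hyperbolic metric `l⁰` assigning a positive length
to each edge.  Boundary components are indexed by `Fin n`; each face is a triple of
pairwise distinct boundary indices; every boundary index occurs in at least one face. -/
structure IdealTriangulatedSurface (n : ℕ) where
  /-- The set of faces (ideal triangles), each recorded by the triple of boundary
  components it meets. -/
  F : Finset (Fin n × Fin n × Fin n)
  /-- The three boundary indices of a face are pairwise distinct. -/
  distinct : ∀ f ∈ F, f.1 ≠ f.2.1 ∧ f.2.1 ≠ f.2.2 ∧ f.2.2 ≠ f.1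
  /-- Every boundary component meets some face. -/
  covers : ∀ i : Fin n, ∃ f ∈ F, i = f.1 ∨ i = f.2.1 ∨ i = f.2.2
  /-- The fixed hyperbolic metric: the length `l⁰_ij > 0` of the edge `ij`. -/
  l0 : Fin n → Fin n → ℝ
  l0_symm : ∀ i j, l0 i j = l0 j i
  l0_pos : ∀ i j, 0 < l0 i j

namespace IdealTriangulatedSurface

variable {n : ℕ} (S : IdealTriangulatedSurface n)

/-- `i j` is an edge of the ideal triangulation: `i ≠ j` and some face contains
both boundary indices `i` and `j`. -/
def IsEdge (i j : Fin n) : Prop :=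
  i ≠ j ∧ ∃ f ∈ S.F, (i = f.1 ∨ i = f.2.1 ∨ i = f.2.2) ∧ (j = f.1 ∨ j = f.2.1 ∨ j = f.2.2)

/-- The space `W` of combinatorial conformal factors: those `w : Fin n → ℝ` with
`w_i + w_j > −log cosh (l⁰_ij / 2)` for every edge `ij`, i.e. those for which every
deformed edge length `l_ij(w)` is defined and positive. -/
def W : Set (Fin n → ℝ) :=
  {w | ∀ i j : Fin n, S.IsEdge i j →
    -Real.log (Real.cosh (S.l0 i j / 2)) < w i + w j}

/-- The deformed edge length `l_ij(w)`, defined by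
`cosh (l_ij(w)/2) = e^{w_i + w_j} cosh (l⁰_ij/2)`. -/
noncomputable def len (w : Fin n → ℝ) (i j : Fin n) : ℝ :=
  2 * _root_.arcosh (Real.exp (w i + w j) * Real.cosh (S.l0 i j / 2))

/-- `θ^i_jk(w)`: the length of the boundary arc on boundary component `i` of the
right-angled hexagon realizing the face `ijk` in the metric determined by `w`. -/
noncomputable def thetaF (w : Fin n → ℝ) (i j k : Fin n) : ℝ :=
  theta (S.len w j k) (S.len w k i) (S.len w i j)

/-- `B_i(w)`: the length of the boundary component `i`, the sum over all faces
containing `i` of the boundary arc `θ^i` of that face. -/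
noncomputable def Blen (w : Fin n → ℝ) (i : Fin n) : ℝ :=
  ∑ f ∈ S.F,
    ((if i = f.1 then S.thetaF w f.1 f.2.1 f.2.2 else 0)
      + (if i = f.2.1 then S.thetaF w f.2.1 f.2.2 f.1 else 0)
      + (if i = f.2.2 then S.thetaF w f.2.2 f.1 f.2.1 else 0))

end IdealTriangulatedSurface

/-! ### Auxiliary lemmas -/

section ArcoshLemmas

lemma aux_cosh_arcosh {x : ℝ} (hx : 1 ≤ x) : Real.cosh (_root_.arcosh x) = x := by
  have h1 : (0:ℝ) ≤ x ^ 2 - 1 := by nlinarith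
  have hs : Real.sqrt (x ^ 2 - 1) ^ 2 = x ^ 2 - 1 := Real.sq_sqrt h1
  have hs0 : 0 ≤ Real.sqrt (x ^ 2 - 1) := Real.sqrt_nonneg _
  have hpos : 0 < x + Real.sqrt (x ^ 2 - 1) := by nlinarith
  have hinv : (x + Real.sqrt (x ^ 2 - 1))⁻¹ = x - Real.sqrt (x ^ 2 - 1) :=
    inv_eq_of_mul_eq_one_right (by nlinarith)
  rw [_root_.arcosh, Real.cosh_log hpos, hinv]; ring

lemma aux_sinh_arcosh {x : ℝ} (hx : 1 ≤ x) : Real.sinh (_root_.arcosh x) = Real.sqrt (x ^ 2 - 1) := by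
  have h1 : (0:ℝ) ≤ x ^ 2 - 1 := by nlinarith
  have hs : Real.sqrt (x ^ 2 - 1) ^ 2 = x ^ 2 - 1 := Real.sq_sqrt h1
  have hs0 : 0 ≤ Real.sqrt (x ^ 2 - 1) := Real.sqrt_nonneg _
  have hpos : 0 < x + Real.sqrt (x ^ 2 - 1) := by nlinarith
  have hinv : (x + Real.sqrt (x ^ 2 - 1))⁻¹ = x - Real.sqrt (x ^ 2 - 1) :=
    inv_eq_of_mul_eq_one_right (by nlinarith)
  rw [_root_.arcosh, Real.sinh_log hpos, hinv]; ring

lemma aux_arcosh_nonneg {x : ℝ} (hx : 1 ≤ x) : 0 ≤ _root_.arcosh x :=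
  Real.log_nonneg (by nlinarith [Real.sqrt_nonneg (x ^ 2 - 1)])

lemma aux_arcosh_le_log {x y : ℝ} (hx : 1 ≤ x) (hxy : x ≤ y) :
    _root_.arcosh x ≤ Real.log (2 * y) := by
  have h0 : (0:ℝ) ≤ x := by linarith
  have hs : Real.sqrt (x ^ 2 - 1) ≤ x := by
    calc Real.sqrt (x ^ 2 - 1) ≤ Real.sqrt (x ^ 2) := Real.sqrt_le_sqrt (by nlinarith)
      _ = x := Real.sqrt_sq h0
  have hxpos : 0 < x + Real.sqrt (x ^ 2 - 1) := by
    nlinarith [Real.sqrt_nonneg (x ^ 2 - 1)]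
  exact Real.log_le_log hxpos (by linarith)

end ArcoshLemmas

section RatioLemmas

lemma aux_le_of_sq_le_sq {x y : ℝ} (hx : 0 ≤ x) (hy : 0 ≤ y) (h : x ^ 2 ≤ y ^ 2) :
    x ≤ y := by
  calc x = Real.sqrt (x ^ 2) := (Real.sqrt_sq hx).symm
    _ ≤ Real.sqrt (y ^ 2) := Real.sqrt_le_sqrt h
    _ = y := Real.sqrt_sq hy

/-- The geometric ratio defining `θ` is at least `1`. -/
lemma aux_one_le_ratio {a b c sb sc : ℝ} (ha : 1 ≤ a) (hb : 1 < b) (hc : 1 < c)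
    (hsb : sb ^ 2 = b ^ 2 - 1) (hsc : sc ^ 2 = c ^ 2 - 1) (hsb0 : 0 < sb) (hsc0 : 0 < sc) :
    1 ≤ (2 * a ^ 2 - 1 + (2 * b ^ 2 - 1) * (2 * c ^ 2 - 1)) / (2 * sb * b * (2 * sc * c)) := by
  rw [le_div_iff₀ (by positivity)]
  nlinarith [sq_nonneg (b * sc - c * sb), mul_pos hsb0 hsc0,
    mul_pos (mul_pos hsb0 (lt_trans one_pos hb)) (mul_pos hsc0 (lt_trans one_pos hc))]

/-- An explicit constant bounding the ratio. -/
noncomputable def Dq (A B C : ℝ) : ℝ :=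
  (2 * A ^ 2 + 4 * (B * C) ^ 2) /
    (4 * (B * C) * (Real.sqrt (B ^ 2 - 1) * Real.sqrt (C ^ 2 - 1)))

lemma Dq_pos {A B C : ℝ} (hA : 0 < A) (hB : 1 < B) (hC : 1 < C) : 0 < Dq A B C := by
  have h1 : (0:ℝ) < Real.sqrt (B ^ 2 - 1) := Real.sqrt_pos.2 (by nlinarith)
  have h2 : (0:ℝ) < Real.sqrt (C ^ 2 - 1) := Real.sqrt_pos.2 (by nlinarith)
  have hB0 : (0:ℝ) < B := lt_trans one_pos hB
  have hC0 : (0:ℝ) < C := lt_trans one_pos hC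
  unfold Dq; positivity

set_option maxHeartbeats 1000000 in
lemma aux_ratio_le {A B C a b c sb sc : ℝ} (hA : 0 < A) (hB : 1 < B) (hC : 1 < C)
    (hbB : B ≤ b) (hcC : C ≤ c)
    (hsb : sb ^ 2 = b ^ 2 - 1) (hsc : sc ^ 2 = c ^ 2 - 1) (hsb0 : 0 < sb) (hsc0 : 0 < sc)
    (ha0 : 0 < a) (haM : a * (B * C) ≤ A * (b * c)) :
    (2 * a ^ 2 - 1 + (2 * b ^ 2 - 1) * (2 * c ^ 2 - 1)) / (2 * sb * b * (2 * sc * c))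
      ≤ Dq A B C := by
  set sB := Real.sqrt (B ^ 2 - 1) with hsBdef
  set sC := Real.sqrt (C ^ 2 - 1) with hsCdef
  have hsB : sB ^ 2 = B ^ 2 - 1 := Real.sq_sqrt (by nlinarith)
  have hsC : sC ^ 2 = C ^ 2 - 1 := Real.sq_sqrt (by nlinarith)
  have hsB0 : 0 < sB := Real.sqrt_pos.2 (by nlinarith)
  have hsC0 : 0 < sC := Real.sqrt_pos.2 (by nlinarith)
  have hB0 : (0:ℝ) < B := lt_trans one_pos hB
  have hC0 : (0:ℝ) < C := lt_trans one_pos hC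
  have hb0 : (0:ℝ) < b := lt_of_lt_of_le hB0 hbB
  have hc0 : (0:ℝ) < c := lt_of_lt_of_le hC0 hcC
  -- b * sB ≤ B * sb and c * sC ≤ C * sc
  have hB2 : B ^ 2 ≤ b ^ 2 := pow_le_pow_left₀ hB0.le hbB 2
  have hC2 : C ^ 2 ≤ c ^ 2 := pow_le_pow_left₀ hC0.le hcC 2
  have hBsb : b * sB ≤ B * sb := by
    refine aux_le_of_sq_le_sq (by positivity) (by positivity) ?_
    rw [mul_pow, mul_pow, hsB, hsb]; nlinarith
  have hCsc : c * sC ≤ C * sc := by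
    refine aux_le_of_sq_le_sq (by positivity) (by positivity) ?_
    rw [mul_pow, mul_pow, hsC, hsc]; nlinarith
  have hprod : b * sB * (c * sC) ≤ B * sb * (C * sc) :=
    mul_le_mul hBsb hCsc (by positivity) (by positivity)
  -- numerator and denominator bounds
  have hb1 : (1:ℝ) ≤ b := le_trans hB.le hbB
  have hc1 : (1:ℝ) ≤ c := le_trans hC.le hcC
  have hbc2 : (2 * b ^ 2 - 1) * (2 * c ^ 2 - 1) ≤ 4 * (b * c) ^ 2 := by nlinarith
  have ha2 : a ^ 2 * (B * C) ^ 2 ≤ A ^ 2 * (b * c) ^ 2 := by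
    have h1 : 0 ≤ a * (B * C) := by positivity
    have h2 := mul_le_mul haM haM h1 (by positivity)
    nlinarith [h2]
  have hnum : 2 * a ^ 2 - 1 + (2 * b ^ 2 - 1) * (2 * c ^ 2 - 1)
      ≤ (2 * A ^ 2 + 4 * (B * C) ^ 2) * (b * c) ^ 2 / (B * C) ^ 2 := by
    rw [le_div_iff₀ (by positivity)]
    nlinarith [ha2, mul_le_mul_of_nonneg_left hbc2 (sq_nonneg (B * C)), sq_nonneg (B * C)]
  have hden : 4 * (b * c) ^ 2 * (sB * sC) / (B * C) ≤ 2 * sb * b * (2 * sc * c) := by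
    rw [div_le_iff₀ (by positivity)]
    nlinarith [mul_le_mul_of_nonneg_left hprod (show (0:ℝ) ≤ 4 * (b * c) by positivity)]
  have hdpos : (0:ℝ) < 4 * (b * c) ^ 2 * (sB * sC) / (B * C) := by positivity
  have hnum0 : (0:ℝ) ≤ (2 * A ^ 2 + 4 * (B * C) ^ 2) * (b * c) ^ 2 / (B * C) ^ 2 := by
    positivity
  calc (2 * a ^ 2 - 1 + (2 * b ^ 2 - 1) * (2 * c ^ 2 - 1)) / (2 * sb * b * (2 * sc * c))
      ≤ ((2 * A ^ 2 + 4 * (B * C) ^ 2) * (b * c) ^ 2 / (B * C) ^ 2) /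
          (4 * (b * c) ^ 2 * (sB * sC) / (B * C)) := div_le_div₀ hnum0 hnum hdpos hden
    _ = Dq A B C := by
        unfold Dq
        rw [← hsBdef, ← hsCdef]
        field_simp

end RatioLemmas

namespace IdealTriangulatedSurface

variable {n : ℕ} (S : IdealTriangulatedSurface n)

/-- `cosh (l⁰_ij / 2)`. -/
noncomputable def cA (i j : Fin n) : ℝ := Real.cosh (S.l0 i j / 2)

lemma one_lt_cA (i j : Fin n) : 1 < S.cA i j :=
  Real.one_lt_cosh.2 (ne_of_gt (by have := S.l0_pos i j; linarith))

lemma cA_pos (i j : Fin n) : 0 < S.cA i j := lt_trans one_pos (S.one_lt_cA i j)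

lemma cosh_len {w : Fin n → ℝ} {i j : Fin n}
    (h : 1 ≤ Real.exp (w i + w j) * S.cA i j) :
    Real.cosh (S.len w i j) = 2 * (Real.exp (w i + w j) * S.cA i j) ^ 2 - 1 := by
  unfold cA at h ⊢
  have h2 : (0:ℝ) ≤ (Real.exp (w i + w j) * Real.cosh (S.l0 i j / 2)) ^ 2 - 1 := by nlinarith
  rw [len, Real.cosh_two_mul, aux_cosh_arcosh h, aux_sinh_arcosh h, Real.sq_sqrt h2]
  ring

lemma sinh_len {w : Fin n → ℝ} {i j : Fin n}
    (h : 1 ≤ Real.exp (w i + w j) * S.cA i j) :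
    Real.sinh (S.len w i j)
      = 2 * Real.sqrt ((Real.exp (w i + w j) * S.cA i j) ^ 2 - 1)
          * (Real.exp (w i + w j) * S.cA i j) := by
  unfold cA at h ⊢
  rw [len, Real.sinh_two_mul, aux_cosh_arcosh h, aux_sinh_arcosh h]

lemma thetaF_eq (w : Fin n → ℝ) (i j k : Fin n)
    (ha : 1 ≤ Real.exp (w j + w k) * S.cA j k)
    (hb : 1 ≤ Real.exp (w k + w i) * S.cA k i)
    (hc : 1 ≤ Real.exp (w i + w j) * S.cA i j) :
    S.thetaF w i j k
      = _root_.arcosh ((2 * (Real.exp (w j + w k) * S.cA j k) ^ 2 - 1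
          + (2 * (Real.exp (w k + w i) * S.cA k i) ^ 2 - 1)
            * (2 * (Real.exp (w i + w j) * S.cA i j) ^ 2 - 1))
        / (2 * Real.sqrt ((Real.exp (w k + w i) * S.cA k i) ^ 2 - 1)
              * (Real.exp (w k + w i) * S.cA k i)
            * (2 * Real.sqrt ((Real.exp (w i + w j) * S.cA i j) ^ 2 - 1)
              * (Real.exp (w i + w j) * S.cA i j)))) := by
  rw [thetaF, theta, S.cosh_len ha, S.cosh_len hb, S.cosh_len hc,
    S.sinh_len hb, S.sinh_len hc]

lemma sqrt_sq_sub_one_pos {x : ℝ} (hx : 1 < x) : 0 < Real.sqrt (x ^ 2 - 1) :=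
  Real.sqrt_pos.2 (by nlinarith)

lemma sq_sqrt_sq_sub_one {x : ℝ} (hx : 1 < x) :
    Real.sqrt (x ^ 2 - 1) ^ 2 = x ^ 2 - 1 := Real.sq_sqrt (by nlinarith)

/-- Any `θ` along the flow is nonnegative. -/
lemma thetaF_nonneg (w : Fin n → ℝ) (i j k : Fin n)
    (ha : 1 < Real.exp (w j + w k) * S.cA j k)
    (hb : 1 < Real.exp (w k + w i) * S.cA k i)
    (hc : 1 < Real.exp (w i + w j) * S.cA i j) :
    0 ≤ S.thetaF w i j k := by
  rw [S.thetaF_eq w i j k ha.le hb.le hc.le]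
  exact aux_arcosh_nonneg (aux_one_le_ratio ha.le hb hc
    (sq_sqrt_sq_sub_one hb) (sq_sqrt_sq_sub_one hc)
    (sqrt_sq_sub_one_pos hb) (sqrt_sq_sub_one_pos hc))

/-- The per-triple upper bound constant for `θ`. -/
noncomputable def Tcf (i j k : Fin n) : ℝ :=
  Real.log (2 * Dq (S.cA j k) (S.cA k i) (S.cA i j))

/-- When all conformal factors are nonnegative, `θ` is bounded by an explicit constant. -/
lemma thetaF_le (w : Fin n → ℝ) (hw : ∀ m, 0 ≤ w m) (i j k : Fin n) :
    S.thetaF w i j k ≤ S.Tcf i j k := by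
  set a := Real.exp (w j + w k) * S.cA j k with hadef
  set b := Real.exp (w k + w i) * S.cA k i with hbdef
  set c := Real.exp (w i + w j) * S.cA i j with hcdef
  have hea : 1 ≤ Real.exp (w j + w k) := Real.one_le_exp (by
    have := hw j; have := hw k; linarith)
  have heb : 1 ≤ Real.exp (w k + w i) := Real.one_le_exp (by
    have := hw k; have := hw i; linarith)
  have hec : 1 ≤ Real.exp (w i + w j) := Real.one_le_exp (by
    have := hw i; have := hw j; linarith)
  have hAa : 1 < S.cA j k := S.one_lt_cA j k
  have hAb : 1 < S.cA k i := S.one_lt_cA k i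
  have hAc : 1 < S.cA i j := S.one_lt_cA i j
  have ha : 1 < a := by
    rw [hadef]; nlinarith [Real.exp_pos (w j + w k)]
  have hb : 1 < b := by
    rw [hbdef]; nlinarith [Real.exp_pos (w k + w i)]
  have hc : 1 < c := by
    rw [hcdef]; nlinarith [Real.exp_pos (w i + w j)]
  have hbB : S.cA k i ≤ b := by
    rw [hbdef]; nlinarith [S.cA_pos k i]
  have hcC : S.cA i j ≤ c := by
    rw [hcdef]; nlinarith [S.cA_pos i j]
  have hexp : Real.exp (w j + w k) ≤ Real.exp (w k + w i) * Real.exp (w i + w j) := by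
    rw [← Real.exp_add]
    exact Real.exp_le_exp.2 (by have := hw i; linarith)
  have haM : a * (S.cA k i * S.cA i j) ≤ S.cA j k * (b * c) := by
    rw [hadef, hbdef, hcdef]
    have h1 : 0 < S.cA j k * (S.cA k i * S.cA i j) := by
      have := S.cA_pos j k; have := S.cA_pos k i; have := S.cA_pos i j; positivity
    nlinarith [mul_le_mul_of_nonneg_left hexp (le_of_lt h1), S.cA_pos j k,
      S.cA_pos k i, S.cA_pos i j]
  have hratio := aux_ratio_le (lt_trans one_pos hAa) hAb hAc hbB hcC
    (sq_sqrt_sq_sub_one hb) (sq_sqrt_sq_sub_one hc)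
    (sqrt_sq_sub_one_pos hb) (sqrt_sq_sub_one_pos hc) (lt_trans one_pos ha) haM
  have hone := aux_one_le_ratio ha.le hb hc
    (sq_sqrt_sq_sub_one hb) (sq_sqrt_sq_sub_one hc)
    (sqrt_sq_sub_one_pos hb) (sqrt_sq_sub_one_pos hc)
  rw [S.thetaF_eq w i j k ha.le hb.le hc.le, Tcf]
  exact aux_arcosh_le_log hone hratio

/-- The global bound for the flow velocity. -/
noncomputable def Kcf : ℝ :=
  ∑ f ∈ S.F, (|S.Tcf f.1 f.2.1 f.2.2| + |S.Tcf f.2.1 f.2.2 f.1| + |S.Tcf f.2.2 f.1 f.2.1|)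

lemma Kcf_nonneg : 0 ≤ S.Kcf :=
  Finset.sum_nonneg fun f _ => by positivity

lemma edge_arg_lt {w : Fin n → ℝ} (hw : w ∈ S.W) {p q : Fin n} (hpq : S.IsEdge p q) :
    1 < Real.exp (w p + w q) * S.cA p q := by
  have h := hw p q hpq
  have hA : 0 < Real.cosh (S.l0 p q / 2) := Real.cosh_pos _
  have h2 : (Real.cosh (S.l0 p q / 2))⁻¹ < Real.exp (w p + w q) := by
    have h4 := Real.exp_lt_exp.2 h
    rwa [Real.exp_neg, Real.exp_log hA] at h4
  have h3 : Real.cosh (S.l0 p q / 2) * (Real.cosh (S.l0 p q / 2))⁻¹ = 1 :=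
    mul_inv_cancel₀ (ne_of_gt hA)
  unfold cA
  nlinarith

lemma Blen_nonneg {w : Fin n → ℝ} (hw : w ∈ S.W) (i : Fin n) : 0 ≤ S.Blen w i := by
  rw [Blen]
  refine Finset.sum_nonneg fun f hf => ?_
  obtain ⟨h12, h23, h31⟩ := S.distinct f hf
  have mem1 : f.1 = f.1 ∨ f.1 = f.2.1 ∨ f.1 = f.2.2 := Or.inl rfl
  have mem2 : f.2.1 = f.1 ∨ f.2.1 = f.2.1 ∨ f.2.1 = f.2.2 := Or.inr (Or.inl rfl)
  have mem3 : f.2.2 = f.1 ∨ f.2.2 = f.2.1 ∨ f.2.2 = f.2.2 := Or.inr (Or.inr rfl)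
  have e12 := S.edge_arg_lt hw ⟨h12, f, hf, mem1, mem2⟩
  have e21 := S.edge_arg_lt hw ⟨h12.symm, f, hf, mem2, mem1⟩
  have e23 := S.edge_arg_lt hw ⟨h23, f, hf, mem2, mem3⟩
  have e32 := S.edge_arg_lt hw ⟨h23.symm, f, hf, mem3, mem2⟩
  have e31 := S.edge_arg_lt hw ⟨h31, f, hf, mem3, mem1⟩
  have e13 := S.edge_arg_lt hw ⟨h31.symm, f, hf, mem1, mem3⟩
  have t1 : 0 ≤ (if i = f.1 then S.thetaF w f.1 f.2.1 f.2.2 else 0) := by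
    split_ifs
    · exact S.thetaF_nonneg w f.1 f.2.1 f.2.2 e23 e31 e12
    · exact le_refl 0
  have t2 : 0 ≤ (if i = f.2.1 then S.thetaF w f.2.1 f.2.2 f.1 else 0) := by
    split_ifs
    · exact S.thetaF_nonneg w f.2.1 f.2.2 f.1 e31 e12 e23
    · exact le_refl 0
  have t3 : 0 ≤ (if i = f.2.2 then S.thetaF w f.2.2 f.1 f.2.1 else 0) := by
    split_ifs
    · exact S.thetaF_nonneg w f.2.2 f.1 f.2.1 e12 e23 e31
    · exact le_refl 0
  linarith

lemma Blen_le {w : Fin n → ℝ} (hw : ∀ m, 0 ≤ w m) (i : Fin n) :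
    S.Blen w i ≤ S.Kcf := by
  rw [Blen, Kcf]
  refine Finset.sum_le_sum fun f hf => ?_
  have t1 : (if i = f.1 then S.thetaF w f.1 f.2.1 f.2.2 else 0) ≤ |S.Tcf f.1 f.2.1 f.2.2| := by
    split_ifs
    · exact le_trans (S.thetaF_le w hw f.1 f.2.1 f.2.2) (le_abs_self _)
    · exact abs_nonneg _
  have t2 : (if i = f.2.1 then S.thetaF w f.2.1 f.2.2 f.1 else 0) ≤ |S.Tcf f.2.1 f.2.2 f.1| := by
    split_ifs
    · exact le_trans (S.thetaF_le w hw f.2.1 f.2.2 f.1) (le_abs_self _)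
    · exact abs_nonneg _
  have t3 : (if i = f.2.2 then S.thetaF w f.2.2 f.1 f.2.1 else 0) ≤ |S.Tcf f.2.2 f.1 f.2.1| := by
    split_ifs
    · exact le_trans (S.thetaF_le w hw f.2.2 f.1 f.2.1) (le_abs_self _)
    · exact abs_nonneg _
  linarith

end IdealTriangulatedSurface


/-- part of the proof of Theorem 4: for finite `L`, along any `C¹`
solution `w : [0,L) → W` of the combinatorial Yamabe flow with `w(0) = 0`, every
coordinate `w_i` stays bounded above on `[0,L)`: no coordinate blows up to `+∞`
in finite time. -/
theorem stmt_16 {n : ℕ} (hn : 1 ≤ n) (S : IdealTriangulatedSurface n)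
    (L : ℝ) (w : ℝ → (Fin n → ℝ)) (h0 : w 0 = 0)
    (hmem : ∀ t ∈ Set.Ico (0 : ℝ) L, w t ∈ S.W)
    (hflow : ∀ t ∈ Set.Ico (0 : ℝ) L, ∀ i : Fin n,
      HasDerivWithinAt (fun s => w s i) (S.Blen (w t) i) (Set.Ico 0 L) t) :
    ∀ i : Fin n, ∃ C : ℝ, ∀ t ∈ Set.Ico (0 : ℝ) L, w t i ≤ C := by
  intro i
  rcases le_or_gt L 0 with hL | hL
  · exact ⟨0, fun t ht => absurd ht.2 (not_lt.2 (hL.trans ht.1))⟩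
  have h0mem : (0:ℝ) ∈ Set.Ico (0:ℝ) L := ⟨le_refl 0, hL⟩
  have hconv : Convex ℝ (Set.Ico (0:ℝ) L) := convex_Ico 0 L
  have hcont : ∀ j : Fin n, ContinuousOn (fun s => w s j) (Set.Ico 0 L) :=
    fun j t ht => (hflow t ht j).continuousWithinAt
  have hint : interior (Set.Ico (0:ℝ) L) = Set.Ioo 0 L := interior_Ico
  have hmono : ∀ j : Fin n, MonotoneOn (fun s => w s j) (Set.Ico 0 L) := by
    intro j
    refine monotoneOn_of_hasDerivWithinAt_nonneg (f' := fun s => S.Blen (w s) j)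
      hconv (hcont j) ?_ ?_
    · intro x hx
      rw [hint] at hx ⊢
      exact (hflow x (Ioo_subset_Ico_self hx) j).mono Ioo_subset_Ico_self
    · intro x hx
      rw [hint] at hx
      exact S.Blen_nonneg (hmem x (Ioo_subset_Ico_self hx)) j
  have hw0 : ∀ t ∈ Set.Ico (0:ℝ) L, ∀ m, 0 ≤ w t m := by
    intro t ht m
    have h := hmono m h0mem ht ht.1
    simpa [h0] using h
  have hbound : ∀ t ∈ Set.Ico (0:ℝ) L, ‖S.Blen (w t) i‖ ≤ S.Kcf := by
    intro t ht
    rw [Real.norm_eq_abs, abs_of_nonneg (S.Blen_nonneg (hmem t ht) i)]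
    exact S.Blen_le (hw0 t ht) i
  refine ⟨S.Kcf * L, fun t ht => ?_⟩
  have h2 := hconv.norm_image_sub_le_of_norm_hasDerivWithin_le
    (fun x hx => hflow x hx i) hbound h0mem ht
  rw [h0] at h2
  simp only [Pi.zero_apply, sub_zero, Real.norm_eq_abs] at h2
  have habs : |w t i| ≤ S.Kcf * t := by
    rwa [abs_of_nonneg ht.1] at h2
  calc w t i ≤ |w t i| := le_abs_self _
    _ ≤ S.Kcf * t := habs
    _ ≤ S.Kcf * L := mul_le_mul_of_nonneg_left ht.2.le (S.Kcf_nonneg)
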